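/- For all positive integers r and s with s < r, the following identity holds: ∫_0^π e^{−iu} f_r(ψ_s(u)) du = m^{−r} ∫_0^{π/m} e^{−ium^{−r}} ψ_{s+r}(u) du + Σ_{l=0}^{r} m^{−l} ∫_{π/m}^{π} e^{−ium^{−l}} f_{r−l}(ψ_{s+l}(u)) du, where ψ_k(u) = f_k(e^{ium^{−k}}) is the characteristic function of W_k = m^{−k}Z_k. -/

import Mathlib

open MeasureTheory ProbabilityTheory Filter Set
open scoped ENNReal

noncomputable section

/-- `-log` of a nonnegative real, valued in `[0,∞]` (equals `∞` when the input is `≤ 0`). -/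
def negLog (s : ℝ) : ℝ≥0∞ := if s ≤ 0 then ⊤ else ENNReal.ofReal (-Real.log s)

/-- `e^{-t}` for `t ∈ [0,∞]`, with `e^{-∞} = 0`. -/
def expNegE (t : ℝ≥0∞) : ℝ := if t = ⊤ then 0 else Real.exp (-t.toReal)

/-- `EReal → ℝ≥0∞`, sending `⊤` to `⊤` and everything `≤ 0` to `0`. -/
def erealToENN (e : EReal) : ℝ≥0∞ := if e = ⊤ then ⊤ else ENNReal.ofReal e.toReal

/-- The large deviation principle for a sequence of (probability) measures on `ℝ` with
speed `a` and rate function `I`. -/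
def SatisfiesLDP (μs : ℕ → Measure ℝ) (a : ℕ → ℝ) (I : ℝ → ℝ≥0∞) : Prop :=
  LowerSemicontinuous I ∧
  (∀ G : Set ℝ, IsOpen G →
    (-(⨅ x ∈ G, (I x : EReal))) ≤
      Filter.liminf (fun n => ((a n)⁻¹ : EReal) * ENNReal.log (μs n G)) atTop) ∧
  (∀ F : Set ℝ, IsClosed F →
    Filter.limsup (fun n => ((a n)⁻¹ : EReal) * ENNReal.log (μs n F)) atTop ≤
      -(⨅ x ∈ F, (I x : EReal)))

/-- A good rate function: all (finite-level) level sets are compact. -/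
def GoodRate (I : ℝ → ℝ≥0∞) : Prop := ∀ L : ℝ≥0∞, L ≠ ⊤ → IsCompact {x | I x ≤ L}

/-- The generating function `f(s) = Σ_j p_j s^j` of the offspring distribution. -/
def gwf (p : ℕ → ℝ) : ℝ → ℝ := fun s => ∑' j, p j * s ^ j

/-- The hypotheses of a supercritical Galton–Watson process `Z` with offspring
distribution `p` (with `p 0 = 0`), offspring mean `m > 1`, built from the i.i.d. family `ξ`. -/
structure GWSetup {Ω : Type*} [MeasurableSpace Ω] (μ : Measure Ω) (p : ℕ → ℝ) (m : ℝ)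
    (ξ : ℕ → ℕ → Ω → ℕ) (Z : ℕ → Ω → ℕ) : Prop where
  prob : IsProbabilityMeasure μ
  pnonneg : ∀ j, 0 ≤ p j
  psum : HasSum p 1
  p0 : p 0 = 0
  mdef : HasSum (fun j : ℕ => (j : ℝ) * p j) m
  mgt1 : 1 < m
  meas : ∀ n i, Measurable (ξ n i)
  dist : ∀ n i j, (μ {ω | ξ n i ω = j}).toReal = p j
  indep : iIndepFun (fun (ni : ℕ × ℕ) ω => ξ ni.1 ni.2 ω) μ
  Z0 : ∀ ω, Z 0 ω = 1
  Zrec : ∀ n ω, Z (n + 1) ω = ∑ i ∈ Finset.range (Z n ω), ξ n i ω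


/-- The offspring generating function on the complex disc. -/
def gwfC (p : ℕ → ℝ) : ℂ → ℂ := fun z => ∑' j, (p j : ℂ) * z ^ j

/-- `ψ_k(u) = f_k(e^{ium^{-k}})`, the characteristic function of `W_k = m^{-k} Z_k`. -/
def psiC (p : ℕ → ℝ) (m : ℝ) (k : ℕ) (u : ℝ) : ℂ :=
  (gwfC p)^[k] (Complex.exp (Complex.I * ((u / m ^ k : ℝ) : ℂ)))

lemma gwfC_norm_le (p : ℕ → ℝ) (hpnn : ∀ j, 0 ≤ p j) (hpsum : HasSum p 1)
    {z : ℂ} (hz : ‖z‖ ≤ 1) : ‖gwfC p z‖ ≤ 1 := by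
  have hle : ∀ j, ‖(p j : ℂ) * z ^ j‖ ≤ p j := by
    intro j
    rw [norm_mul, norm_pow, Complex.norm_real, Real.norm_of_nonneg (hpnn j)]
    exact mul_le_of_le_one_right (hpnn j) (pow_le_one₀ (norm_nonneg z) hz)
  have hsum : Summable (fun j => ‖(p j : ℂ) * z ^ j‖) :=
    Summable.of_nonneg_of_le (fun j => norm_nonneg _) hle hpsum.summable
  calc ‖gwfC p z‖ ≤ ∑' j, ‖(p j : ℂ) * z ^ j‖ := norm_tsum_le_tsum_norm hsum
    _ ≤ ∑' j, p j := Summable.tsum_le_tsum hle hsum hpsum.summable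
    _ = 1 := hpsum.tsum_eq

lemma gwfC_contOn (p : ℕ → ℝ) (hpnn : ∀ j, 0 ≤ p j) (hpsum : HasSum p 1) :
    ContinuousOn (gwfC p) {z : ℂ | ‖z‖ ≤ 1} := by
  apply continuousOn_tsum (u := p) (fun j => (by continuity : Continuous fun z : ℂ => (p j : ℂ) * z ^ j).continuousOn) hpsum.summable
  intro j z hz
  simp only [mem_setOf_eq] at hz
  rw [norm_mul, norm_pow, Complex.norm_real, Real.norm_of_nonneg (hpnn j)]
  exact mul_le_of_le_one_right (hpnn j) (pow_le_one₀ (norm_nonneg z) hz)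


open scoped Real in
/-- Lemma 1 of Ney–Vidyashankar (the decomposition lemma). -/
theorem stmt15 (p : ℕ → ℝ) (m : ℝ)
    (hpnn : ∀ j, 0 ≤ p j) (hpsum : HasSum p 1) (hp0 : p 0 = 0)
    (hm : HasSum (fun j : ℕ => (j : ℝ) * p j) m) (hm1 : 1 < m) :
    ∀ r s : ℕ, 0 < s → s < r →
      (∫ u in (0:ℝ)..π, Complex.exp (-(Complex.I * u)) * (gwfC p)^[r] (psiC p m s u)) =
        ((m : ℂ) ^ r)⁻¹ *
          (∫ u in (0:ℝ)..(π / m),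
            Complex.exp (-(Complex.I * ((u / m ^ r : ℝ) : ℂ))) * psiC p m (s + r) u) +
        ∑ l ∈ Finset.range (r + 1), ((m : ℂ) ^ l)⁻¹ *
          (∫ u in (π / m)..π,
            Complex.exp (-(Complex.I * ((u / m ^ l : ℝ) : ℂ))) *
              (gwfC p)^[r - l] (psiC p m (s + l) u)) := by
  intro r s _hs hsr
  have hm0 : (0:ℝ) < m := one_pos.trans hm1
  have hmne : m ≠ 0 := ne_of_gt hm0
  have hmCne : (m : ℂ) ≠ 0 := by exact_mod_cast hmne
  -- continuity of iterates on the closed unit disc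
  have hmaps : MapsTo (gwfC p) {z : ℂ | ‖z‖ ≤ 1} {z : ℂ | ‖z‖ ≤ 1} :=
    fun z hz => gwfC_norm_le p hpnn hpsum hz
  have hiter : ∀ k : ℕ, ContinuousOn ((gwfC p)^[k]) {z : ℂ | ‖z‖ ≤ 1} ∧
      MapsTo ((gwfC p)^[k]) {z : ℂ | ‖z‖ ≤ 1} {z : ℂ | ‖z‖ ≤ 1} := by
    intro k
    induction k with
    | zero => exact ⟨continuousOn_id, mapsTo_id _⟩
    | succ k ih =>
      rw [Function.iterate_succ']
      exact ⟨(gwfC_contOn p hpnn hpsum).comp ih.1 ih.2, hmaps.comp ih.2⟩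
  -- the key function h
  set h : ℝ → ℂ := fun u => Complex.exp (-(Complex.I * u)) *
    (gwfC p)^[r + s] (Complex.exp (Complex.I * ((u / m ^ s : ℝ) : ℂ))) with hhdef
  have hcont : Continuous h := by
    apply Continuous.mul
    · exact Complex.continuous_exp.comp (by continuity)
    · apply (hiter (r + s)).1.comp_continuous
      · exact Complex.continuous_exp.comp (by continuity)
      · intro u
        simp only [mem_setOf_eq, Complex.norm_exp]
        have : (Complex.I * ((u / m ^ s : ℝ) : ℂ)).re = 0 := by
          rw [Complex.mul_re, Complex.I_re, Complex.I_im, Complex.ofReal_im]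
          ring
        rw [this, Real.exp_zero]
  have hint : ∀ a b : ℝ, IntervalIntegrable h volume a b :=
    fun a b => hcont.intervalIntegrable a b
  -- pointwise identities
  have e2 : ∀ l, l ≤ r → ∀ u : ℝ,
      Complex.exp (-(Complex.I * ((u / m ^ l : ℝ) : ℂ))) *
        (gwfC p)^[r - l] (psiC p m (s + l) u) = h (u / m ^ l) := by
    intro l hl u
    simp only [psiC, hhdef]
    rw [← Function.iterate_add_apply]
    have h1 : r - l + (s + l) = r + s := by omega
    have h2 : u / m ^ l / m ^ s = u / m ^ (s + l) := by
      rw [div_div, ← pow_add, add_comm l s]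
    rw [h1, h2]
  -- substitution
  have sub : ∀ (l : ℕ) (a b : ℝ), ((m : ℂ) ^ l)⁻¹ * (∫ u in a..b, h (u / m ^ l)) =
      ∫ u in (a / m ^ l)..(b / m ^ l), h u := by
    intro l a b
    rw [intervalIntegral.integral_comp_div (f := h) (c := m ^ l) (pow_ne_zero l hmne)]
    rw [Complex.real_smul, ← mul_assoc]
    push_cast
    rw [inv_mul_cancel₀ (pow_ne_zero l hmCne), one_mul]
  -- rewrite LHS
  have eLHS : (∫ u in (0:ℝ)..π, Complex.exp (-(Complex.I * u)) * (gwfC p)^[r] (psiC p m s u))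
      = ∫ u in (0:ℝ)..π, h u := by
    apply intervalIntegral.integral_congr
    intro u _
    simp only [psiC, hhdef, ← Function.iterate_add_apply]
  -- rewrite first RHS term
  have eFirst : ((m : ℂ) ^ r)⁻¹ *
      (∫ u in (0:ℝ)..(π / m),
        Complex.exp (-(Complex.I * ((u / m ^ r : ℝ) : ℂ))) * psiC p m (s + r) u)
      = ∫ u in (0:ℝ)..(π / m ^ (r + 1)), h u := by
    have : (∫ u in (0:ℝ)..(π / m),
        Complex.exp (-(Complex.I * ((u / m ^ r : ℝ) : ℂ))) * psiC p m (s + r) u)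
        = ∫ u in (0:ℝ)..(π / m), h (u / m ^ r) := by
      apply intervalIntegral.integral_congr
      intro u _
      have := e2 r le_rfl u
      simpa using this
    rw [this, sub r]
    congr 1
    · simp
    · rw [div_div, ← pow_succ']
  -- rewrite sum terms
  have eSum : ∀ l ∈ Finset.range (r + 1), ((m : ℂ) ^ l)⁻¹ *
      (∫ u in (π / m)..π,
        Complex.exp (-(Complex.I * ((u / m ^ l : ℝ) : ℂ))) *
          (gwfC p)^[r - l] (psiC p m (s + l) u))
      = ∫ u in (π / m ^ (l + 1))..(π / m ^ l), h u := by
    intro l hl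
    rw [Finset.mem_range] at hl
    have : (∫ u in (π / m)..π,
        Complex.exp (-(Complex.I * ((u / m ^ l : ℝ) : ℂ))) *
          (gwfC p)^[r - l] (psiC p m (s + l) u))
        = ∫ u in (π / m)..π, h (u / m ^ l) := by
      apply intervalIntegral.integral_congr
      intro u _
      exact e2 l (by omega) u
    rw [this, sub l]
    congr 1
    rw [div_div, ← pow_succ']
  rw [eLHS, eFirst, Finset.sum_congr rfl eSum]
  -- telescoping
  have hadj : ∑ l ∈ Finset.range (r + 1), ∫ u in (π / m ^ (l + 1))..(π / m ^ l), h u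
      = ∫ u in (π / m ^ (r + 1))..π, h u := by
    have key := intervalIntegral.sum_integral_adjacent_intervals
      (f := h) (μ := volume) (a := fun i => π / m ^ (r + 1 - i)) (n := r + 1)
      (fun k _ => hint _ _)
    rw [← Finset.sum_range_reflect]
    calc ∑ l ∈ Finset.range (r + 1), ∫ u in (π / m ^ (r + 1 - 1 - l + 1))..(π / m ^ (r + 1 - 1 - l)), h u
        = ∑ l ∈ Finset.range (r + 1), ∫ u in (π / m ^ (r + 1 - l))..(π / m ^ (r + 1 - (l + 1))), h u := by
          apply Finset.sum_congr rfl
          intro l hl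
          rw [Finset.mem_range] at hl
          have h1 : r + 1 - 1 - l + 1 = r + 1 - l := by omega
          have h2 : r + 1 - 1 - l = r + 1 - (l + 1) := by omega
          rw [h1, h2]
      _ = ∫ u in (π / m ^ (r + 1 - 0))..(π / m ^ (r + 1 - (r + 1))), h u := key
      _ = ∫ u in (π / m ^ (r + 1))..π, h u := by norm_num
  rw [hadj]
  exact (intervalIntegral.integral_add_adjacent_intervals (hint _ _) (hint _ _)).symm

end
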